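/- For tensors A : [n]^{2d} → F and B : [n]^{2e} → F, the measure ρ satisfies ρ(A ⊗ B) ≤ n^{−1} · min{ρ(A), ρ(B)}. -/

import Mathlib

open Matrix BigOperators

/-- Membership function of the row-index set `I_{a,α,b} ⊆ [2d]` (here `d = e+1`,
0-indexed coordinates `0,…,2e+1` standing for `1,…,2d`): coordinate `1` (i.e. `t = 0`)
belongs to `I` iff `a = 1`; coordinate `2d` (i.e. `t = 2e+1`) belongs to `I` iff `b = 0`;
and for `k ∈ [d-1]` exactly one of the coordinates `2k, 2k+1` belongs to `I`, as selected
by `α_k`. -/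
def ptI (e : ℕ) (a b : Bool) (α : Fin e → Bool) : Finset (Fin (2 * e + 2)) :=
  Finset.univ.filter fun t =>
    (if _h0 : (t : ℕ) = 0 then a
     else if _hl : (t : ℕ) = 2 * e + 1 then !b
     else (α ⟨((t : ℕ) - 1) / 2, by have := t.isLt; omega⟩ ==
        decide (((t : ℕ) - 1) % 2 = 1))) = true

/-- The matrix flattening `Mat_{S,Sᶜ}(A)` of an order-`m` tensor, with rows reading the
coordinates in `S` and columns the coordinates in the complement.  (Rows and columns are
indexed by full assignments, which duplicates rows/columns but preserves the rank.) -/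
def flat {F : Type*} [Field F] {n m : ℕ} (S : Finset (Fin m)) (A : (Fin m → Fin n) → F) :
    Matrix (Fin m → Fin n) (Fin m → Fin n) F :=
  fun x y => A (fun t => if t ∈ S then x t else y t)

/-- The relative rank `relrk_{a,α,b}(A) = n^{-d} · rank(Mat_{I_{a,α,b},J_{a,α,b}}(A))`
of an order-`2d` tensor (`d = e+1`). -/
noncomputable def relrk {F : Type*} [Field F] (n e : ℕ) (a b : Bool) (α : Fin e → Bool)
    (A : (Fin (2 * e + 2) → Fin n) → F) : ℝ :=
  ((flat (ptI e a b α) A).rank : ℝ) / (n : ℝ) ^ (e + 1)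

/-- The complexity measure
`ρ(A) = max_{a,b} min_{{X_α} ⊢ A} ∑_α relrk_{a,α,b}(X_α)` on order-`2d` tensors. -/
noncomputable def rho {F : Type*} [Field F] (n e : ℕ)
    (A : (Fin (2 * e + 2) → Fin n) → F) : ℝ :=
  ⨆ a : Bool, ⨆ b : Bool,
    sInf { r : ℝ | ∃ X : (Fin e → Bool) → ((Fin (2 * e + 2) → Fin n) → F),
      (∑ α, X α) = A ∧ r = ∑ α, relrk n e a b α (X α) }

/-- Concatenation `(α, b, β)` of middle-index strings. -/
def midApp {d₁ d₂ : ℕ} (α : Fin d₁ → Bool) (b : Bool) (β : Fin d₂ → Bool) :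
    Fin (d₁ + d₂ + 1) → Bool :=
  fun k => if h : (k : ℕ) < d₁ then α ⟨k, h⟩
    else if _h2 : (k : ℕ) = d₁ then b
    else β ⟨(k : ℕ) - d₁ - 1, by have := k.isLt; omega⟩

/-- Tensor product of an order-`2(d₁+1)` tensor and an order-`2(d₂+1)` tensor, giving an
order-`2(d₁+d₂+2)` tensor. -/
def tenProd {F : Type*} [Field F] {n d₁ d₂ : ℕ} (A : (Fin (2 * d₁ + 2) → Fin n) → F)
    (B : (Fin (2 * d₂ + 2) → Fin n) → F) : (Fin (2 * (d₁ + d₂ + 1) + 2) → Fin n) → F :=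
  fun x => A (fun t => x ⟨(t : ℕ), by have := t.isLt; omega⟩) *
    B (fun t => x ⟨2 * d₁ + 2 + (t : ℕ), by have := t.isLt; omega⟩)

/-- Splitting an assignment of the combined coordinates into its two halves. -/
def splitIdx {n d₁ d₂ : ℕ} (x : Fin (2 * (d₁ + d₂ + 1) + 2) → Fin n) :
    ((Fin (2 * d₁ + 2) → Fin n) × ((Fin (2 * d₂ + 2) → Fin n))) :=
  (fun t => x ⟨(t : ℕ), by have := t.isLt; omega⟩,
   fun t => x ⟨2 * d₁ + 2 + (t : ℕ), by have := t.isLt; omega⟩)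
section Aux

variable {F : Type*} [Field F]

/-! ### Membership in `ptI` -/

lemma mem_ptI_zero {e : ℕ} {a b : Bool} {α : Fin e → Bool} {t : Fin (2 * e + 2)}
    (h : (t : ℕ) = 0) : t ∈ ptI e a b α ↔ a = true := by
  have ht : t = 0 := Fin.ext (by simp [h])
  subst ht
  simp [ptI]

lemma mem_ptI_last {e : ℕ} {a b : Bool} {α : Fin e → Bool} {t : Fin (2 * e + 2)}
    (h : (t : ℕ) = 2 * e + 1) : t ∈ ptI e a b α ↔ b = false := by
  have h0 : (t : ℕ) ≠ 0 := by omega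
  have ht0 : t ≠ 0 := fun h' => h0 (by rw [h']; simp)
  simp [ptI, h0, h, ht0]

lemma mem_ptI_mid {e : ℕ} {a b : Bool} {α : Fin e → Bool} {t : Fin (2 * e + 2)}
    (h1 : 0 < (t : ℕ)) (h2 : (t : ℕ) < 2 * e + 1) :
    t ∈ ptI e a b α ↔ α ⟨((t : ℕ) - 1) / 2, by omega⟩ = decide (((t : ℕ) - 1) % 2 = 1) := by
  have h0 : (t : ℕ) ≠ 0 := by omega
  have hl : (t : ℕ) ≠ 2 * e + 1 := by omega
  have ht0 : t ≠ 0 := fun h' => h0 (by rw [h']; simp)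
  simp [ptI, h0, hl, ht0]

lemma ptI_compl (e : ℕ) (a b : Bool) (α : Fin e → Bool) :
    (ptI e a b α)ᶜ = ptI e (!a) (!b) (fun k => !(α k)) := by
  ext t
  rw [Finset.mem_compl]
  by_cases h0 : (t : ℕ) = 0
  · rw [mem_ptI_zero h0, mem_ptI_zero h0]
    cases a <;> simp
  by_cases hl : (t : ℕ) = 2 * e + 1
  · rw [mem_ptI_last hl, mem_ptI_last hl]
    cases b <;> simp
  · have h1 : 0 < (t : ℕ) := by omega
    have h2 : (t : ℕ) < 2 * e + 1 := by have := t.isLt; omega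
    rw [mem_ptI_mid h1 h2, mem_ptI_mid h1 h2]
    cases hα : α ⟨((t : ℕ) - 1) / 2, by omega⟩ <;>
      cases hd : decide (((t : ℕ) - 1) % 2 = 1) <;> simp [hα, hd]

/-! ### Rank bounds for flattenings -/

lemma flat_transpose {n m : ℕ} (S : Finset (Fin m))
    (A : (Fin m → Fin n) → F) : (flat S A)ᵀ = flat Sᶜ A := by
  ext y x
  simp only [transpose_apply, flat]
  congr 1
  funext t
  by_cases h : t ∈ S <;> simp [h]

lemma rank_flat_le_pow {n m : ℕ} (S : Finset (Fin m))
    (A : (Fin m → Fin n) → F) : (flat S A).rank ≤ n ^ S.card := by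
  classical
  let Z := ({i : Fin m // i ∈ S} → Fin n)
  let U : Matrix (Fin m → Fin n) Z F :=
    fun x f => if (fun i : {i : Fin m // i ∈ S} => x i.1) = f then 1 else 0
  let V : Matrix Z (Fin m → Fin n) F :=
    fun f y => A (fun t => if h : t ∈ S then f ⟨t, h⟩ else y t)
  have hM : flat S A = U * V := by
    ext x y
    rw [Matrix.mul_apply]
    rw [Finset.sum_eq_single (fun i : {i : Fin m // i ∈ S} => x i.1)]
    · simp only [U, V, if_pos rfl, one_mul, flat]
      congr 1
    · intro f _ hf
      simp only [U, if_neg (Ne.symm hf), zero_mul]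
    · intro h
      exact absurd (Finset.mem_univ _) h
  calc (flat S A).rank ≤ V.rank := hM ▸ Matrix.rank_mul_le_right U V
    _ ≤ Fintype.card Z := V.rank_le_card_height
    _ = n ^ S.card := by simp [Z, Fintype.card_fun]

lemma card_ptI_le (e : ℕ) (α : Fin e → Bool) : (ptI e false true α).card ≤ e := by
  classical
  have h := Finset.card_le_card_of_injOn (f := fun t : Fin (2 * e + 2) => ((t : ℕ) - 1) / 2)
    (s := ptI e false true α) (t := Finset.range e) ?_ ?_
  · simpa using h
  · intro t ht
    have h0 : (t : ℕ) ≠ 0 := fun h => by simpa using (mem_ptI_zero h).mp ht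
    have hl : (t : ℕ) ≠ 2 * e + 1 := fun h => by simpa using (mem_ptI_last h).mp ht
    have := t.isLt
    rw [Finset.mem_coe, Finset.mem_range]
    dsimp only
    omega
  · intro t ht t' ht' hh
    dsimp only at hh
    have h0 : (t : ℕ) ≠ 0 := fun h => by simpa using (mem_ptI_zero h).mp ht
    have hl : (t : ℕ) ≠ 2 * e + 1 := fun h => by simpa using (mem_ptI_last h).mp ht
    have h0' : (t' : ℕ) ≠ 0 := fun h => by simpa using (mem_ptI_zero h).mp ht'
    have hl' : (t' : ℕ) ≠ 2 * e + 1 := fun h => by simpa using (mem_ptI_last h).mp ht'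
    have hb := t.isLt
    have hb' := t'.isLt
    have hm := (mem_ptI_mid (by omega) (by omega)).mp ht
    have hm' := (mem_ptI_mid (by omega) (by omega)).mp ht'
    have hk : (⟨((t : ℕ) - 1) / 2, by omega⟩ : Fin e) = ⟨((t' : ℕ) - 1) / 2, by omega⟩ :=
      Fin.ext hh
    rw [hk] at hm
    rw [hm'] at hm
    have hpar : ((t : ℕ) - 1) % 2 = ((t' : ℕ) - 1) % 2 := by
      have := decide_eq_decide.mp hm.symm
      omega
    exact Fin.ext (by omega)

lemma rank_flat_ptI_le {n e : ℕ} (hn : 0 < n) {a b : Bool} (hab : a ≠ b)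
    (α : Fin e → Bool) (A : (Fin (2 * e + 2) → Fin n) → F) :
    (flat (ptI e a b α) A).rank ≤ n ^ e := by
  rcases a <;> rcases b <;> try exact absurd rfl hab
  · exact le_trans (rank_flat_le_pow _ _) (Nat.pow_le_pow_right hn (card_ptI_le e α))
  · rw [← Matrix.rank_transpose, flat_transpose, ptI_compl]
    exact le_trans (rank_flat_le_pow _ _) (Nat.pow_le_pow_right hn (card_ptI_le e _))

/-! ### Generic separated rank bound -/

lemma exists_col_decomp {X Y : Type*} [Fintype X] [Fintype Y]
    (P : Matrix X Y F) :
    ∃ (u : Fin P.rank → (X → F)) (c : Fin P.rank → (Y → F)),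
      ∀ x y, P x y = ∑ i, c i y * u i x := by
  classical
  set V := Submodule.span F (Set.range Pᵀ) with hV
  have hfr : P.rank = Module.finrank F V := P.rank_eq_finrank_span_cols
  let b : Module.Basis (Fin (Module.finrank F V)) F V := Module.finBasis F V
  have hmem : ∀ y, (fun x => P x y) ∈ V := by
    intro y
    exact Submodule.subset_span ⟨y, rfl⟩
  refine ⟨fun i => (b (Fin.cast hfr i) : X → F),
    fun i y => b.repr ⟨fun x => P x y, hmem y⟩ (Fin.cast hfr i), fun x y => ?_⟩
  have := b.sum_repr ⟨fun x => P x y, hmem y⟩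
  have h2 := congrArg (fun v : V => (v : X → F) x) this
  simp only [Submodule.coe_sum] at h2
  rw [Finset.sum_apply] at h2
  simp only [Submodule.coe_smul, Pi.smul_apply, smul_eq_mul] at h2
  rw [← h2]
  exact Fintype.sum_bijective (finCongr hfr.symm) (finCongr hfr.symm).bijective _ _
    (fun j => rfl)

lemma rank_sep_le {X Y X₁ Y₁ X₂ Y₂ : Type*}
    [Fintype X] [Fintype Y] [Fintype X₁] [Fintype Y₁] [Fintype X₂] [Fintype Y₂]
    (P : Matrix X₁ Y₁ F) (Q : Matrix X₂ Y₂ F)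
    (f : X → X₁) (g : X → X₂) (f' : Y → Y₁) (g' : Y → Y₂) :
    (Matrix.of fun x y => P (f x) (f' y) * Q (g x) (g' y)).rank ≤ P.rank * Q.rank := by
  classical
  obtain ⟨u, c, hP⟩ := exists_col_decomp P
  obtain ⟨v, d, hQ⟩ := exists_col_decomp Q
  let U : Matrix X (Fin P.rank × Fin Q.rank) F := fun x p => u p.1 (f x) * v p.2 (g x)
  let C : Matrix (Fin P.rank × Fin Q.rank) Y F := fun p y => c p.1 (f' y) * d p.2 (g' y)
  have hM : (Matrix.of fun x y => P (f x) (f' y) * Q (g x) (g' y)) = U * C := by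
    ext x y
    rw [Matrix.of_apply, Matrix.mul_apply, hP, hQ, Finset.sum_mul_sum,
      Fintype.sum_prod_type]
    exact Finset.sum_congr rfl fun i _ => Finset.sum_congr rfl fun j _ => by
      dsimp [U, C]; ring
  calc (Matrix.of fun x y => P (f x) (f' y) * Q (g x) (g' y)).rank
      ≤ U.rank := hM ▸ Matrix.rank_mul_le_left U C
    _ ≤ Fintype.card (Fin P.rank × Fin Q.rank) := U.rank_le_card_width
    _ = P.rank * Q.rank := by simp

/-! ### `midApp` evaluation -/

lemma midApp_lt {d₁ d₂ : ℕ} (α : Fin d₁ → Bool) (b : Bool) (β : Fin d₂ → Bool)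
    (k : Fin (d₁ + d₂ + 1)) (h : (k : ℕ) < d₁) : midApp α b β k = α ⟨k, h⟩ := by
  simp [midApp, h]

lemma midApp_eq {d₁ d₂ : ℕ} (α : Fin d₁ → Bool) (b : Bool) (β : Fin d₂ → Bool)
    (k : Fin (d₁ + d₂ + 1)) (h : (k : ℕ) = d₁) : midApp α b β k = b := by
  simp [midApp, h]

lemma midApp_gt {d₁ d₂ : ℕ} (α : Fin d₁ → Bool) (b : Bool) (β : Fin d₂ → Bool)
    (k : Fin (d₁ + d₂ + 1)) (h : d₁ < (k : ℕ)) :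
    midApp α b β k = β ⟨(k : ℕ) - d₁ - 1, by have := k.isLt; omega⟩ := by
  have h1 : ¬ ((k : ℕ) < d₁) := by omega
  have h2 : (k : ℕ) ≠ d₁ := by omega
  simp [midApp, h1, h2]

/-! ### Membership transfer for the combined index set -/

lemma mem_ptI_left {d₁ d₂ : ℕ} (a b c : Bool) (α : Fin d₁ → Bool) (β : Fin d₂ → Bool)
    (t : Fin (2 * d₁ + 2)) :
    ((⟨(t : ℕ), by have := t.isLt; omega⟩ : Fin (2 * (d₁ + d₂ + 1) + 2)) ∈
        ptI (d₁ + d₂ + 1) a c (midApp α b β)) ↔ t ∈ ptI d₁ a b α := by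
  have hb := t.isLt
  set t' : Fin (2 * (d₁ + d₂ + 1) + 2) := ⟨(t : ℕ), by omega⟩ with ht'def
  have hv : (t' : ℕ) = (t : ℕ) := rfl
  by_cases h0 : (t : ℕ) = 0
  · rw [mem_ptI_zero (t := t) h0, mem_ptI_zero (t := t') (by omega)]
  by_cases hl : (t : ℕ) = 2 * d₁ + 1
  · rw [mem_ptI_last (t := t) hl, mem_ptI_mid (t := t') (by omega) (by omega)]
    rw [midApp_eq α b β _ (by show ((t : ℕ) - 1) / 2 = d₁; omega)]
    have hd : decide (((t' : ℕ) - 1) % 2 = 1) = false :=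
      decide_eq_false (by rw [hv]; omega)
    rw [hd]
  · have h1 : 0 < (t : ℕ) := by omega
    have h2 : (t : ℕ) < 2 * d₁ + 1 := by omega
    rw [mem_ptI_mid (t := t) h1 h2, mem_ptI_mid (t := t') (by omega) (by omega)]
    rw [midApp_lt α b β _ (by show ((t : ℕ) - 1) / 2 < d₁; omega)]

lemma mem_ptI_right {d₁ d₂ : ℕ} (a b c : Bool) (α : Fin d₁ → Bool) (β : Fin d₂ → Bool)
    (t : Fin (2 * d₂ + 2)) :
    ((⟨2 * d₁ + 2 + (t : ℕ), by have := t.isLt; omega⟩ : Fin (2 * (d₁ + d₂ + 1) + 2)) ∈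
        ptI (d₁ + d₂ + 1) a c (midApp α b β)) ↔ t ∈ ptI d₂ b c β := by
  have hb := t.isLt
  set t' : Fin (2 * (d₁ + d₂ + 1) + 2) := ⟨2 * d₁ + 2 + (t : ℕ), by omega⟩ with ht'def
  have hv : (t' : ℕ) = 2 * d₁ + 2 + (t : ℕ) := rfl
  by_cases h0 : (t : ℕ) = 0
  · rw [mem_ptI_zero (t := t) h0, mem_ptI_mid (t := t') (by omega) (by omega)]
    rw [midApp_eq α b β _ (by show ((t' : ℕ) - 1) / 2 = d₁; rw [hv]; omega)]
    have hd : decide (((t' : ℕ) - 1) % 2 = 1) = true :=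
      decide_eq_true (by rw [hv]; omega)
    rw [hd]
  by_cases hl : (t : ℕ) = 2 * d₂ + 1
  · rw [mem_ptI_last (t := t) hl, mem_ptI_last (t := t') (by omega)]
  · have h1 : 0 < (t : ℕ) := by omega
    have h2 : (t : ℕ) < 2 * d₂ + 1 := by omega
    rw [mem_ptI_mid (t := t) h1 h2, mem_ptI_mid (t := t') (by omega) (by omega)]
    rw [midApp_gt α b β _ (by show d₁ < ((t' : ℕ) - 1) / 2; rw [hv]; omega)]
    have hidx : (⟨((t' : ℕ) - 1) / 2 - d₁ - 1, by have := t.isLt; rw [hv]; omega⟩ : Fin d₂)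
        = ⟨((t : ℕ) - 1) / 2, by omega⟩ :=
      Fin.ext (show ((2 * d₁ + 2 + (t : ℕ)) - 1) / 2 - d₁ - 1 = ((t : ℕ) - 1) / 2 by omega)
    rw [hidx]
    have hd : decide (((t' : ℕ) - 1) % 2 = 1) = decide (((t : ℕ) - 1) % 2 = 1) :=
      decide_eq_decide.mpr (by rw [hv]; constructor <;> intro h <;> omega)
    rw [hd]

/-! ### Flattening of a tensor product -/

lemma flat_tenProd {n d₁ d₂ : ℕ} (a b c : Bool) (α : Fin d₁ → Bool) (β : Fin d₂ → Bool)
    (X : (Fin (2 * d₁ + 2) → Fin n) → F) (Y : (Fin (2 * d₂ + 2) → Fin n) → F) :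
    flat (ptI (d₁ + d₂ + 1) a c (midApp α b β)) (tenProd X Y)
      = Matrix.of fun x y =>
          flat (ptI d₁ a b α) X (splitIdx x).1 (splitIdx y).1 *
          flat (ptI d₂ b c β) Y (splitIdx x).2 (splitIdx y).2 := by
  ext x y
  simp only [flat, tenProd, splitIdx, Matrix.of_apply]
  congr 1
  · congr 1
    funext t
    by_cases h : t ∈ ptI d₁ a b α
    · rw [if_pos ((mem_ptI_left a b c α β t).mpr h), if_pos h]
    · rw [if_neg (fun hh => h ((mem_ptI_left a b c α β t).mp hh)), if_neg h]
  · congr 1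
    funext t
    by_cases h : t ∈ ptI d₂ b c β
    · rw [if_pos ((mem_ptI_right a b c α β t).mpr h), if_pos h]
    · rw [if_neg (fun hh => h ((mem_ptI_right a b c α β t).mp hh)), if_neg h]

/-! ### Basic properties of `relrk` -/

lemma relrk_nonneg {n e : ℕ} (a b : Bool) (α : Fin e → Bool)
    (A : (Fin (2 * e + 2) → Fin n) → F) : 0 ≤ relrk n e a b α A :=
  div_nonneg (Nat.cast_nonneg _) (by positivity)

lemma relrk_zero {n e : ℕ} (a b : Bool) (α : Fin e → Bool) :
    relrk n e a b α (0 : (Fin (2 * e + 2) → Fin n) → F) = 0 := by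
  have h : flat (ptI e a b α) (0 : (Fin (2 * e + 2) → Fin n) → F)
      = (0 : Matrix (Fin (2 * e + 2) → Fin n) (Fin (2 * e + 2) → Fin n) F) := by
    ext x y
    simp [flat]
  rw [relrk, h, Matrix.rank_zero]
  simp

lemma relrk_tenProd_left {n d₁ d₂ : ℕ} (hn : 0 < n) {b c : Bool} (hbc : b ≠ c) (a : Bool)
    (α : Fin d₁ → Bool) (β : Fin d₂ → Bool)
    (X : (Fin (2 * d₁ + 2) → Fin n) → F) (B : (Fin (2 * d₂ + 2) → Fin n) → F) :
    relrk n (d₁ + d₂ + 1) a c (midApp α b β) (tenProd X B)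
      ≤ (n : ℝ)⁻¹ * relrk n d₁ a b α X := by
  have hnR : (0 : ℝ) < n := by exact_mod_cast hn
  have hrank : (flat (ptI (d₁ + d₂ + 1) a c (midApp α b β)) (tenProd X B)).rank
      ≤ (flat (ptI d₁ a b α) X).rank * n ^ d₂ := by
    rw [flat_tenProd a b c α β X B]
    refine le_trans (rank_sep_le _ _ _ _ _ _) ?_
    exact Nat.mul_le_mul_left _ (rank_flat_ptI_le hn hbc β B)
  have h1 : ((flat (ptI (d₁ + d₂ + 1) a c (midApp α b β)) (tenProd X B)).rank : ℝ)
      ≤ ((flat (ptI d₁ a b α) X).rank : ℝ) * (n : ℝ) ^ d₂ := by exact_mod_cast hrank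
  rw [relrk, relrk, div_le_iff₀ (by positivity)]
  calc ((flat (ptI (d₁ + d₂ + 1) a c (midApp α b β)) (tenProd X B)).rank : ℝ)
      ≤ ((flat (ptI d₁ a b α) X).rank : ℝ) * (n : ℝ) ^ d₂ := h1
    _ = (n : ℝ)⁻¹ * (((flat (ptI d₁ a b α) X).rank : ℝ) / (n : ℝ) ^ (d₁ + 1)) *
          (n : ℝ) ^ (d₁ + d₂ + 1 + 1) := by
        field_simp
        ring

lemma relrk_tenProd_right {n d₁ d₂ : ℕ} (hn : 0 < n) {a b : Bool} (hab : a ≠ b) (c : Bool)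
    (α : Fin d₁ → Bool) (β : Fin d₂ → Bool)
    (A : (Fin (2 * d₁ + 2) → Fin n) → F) (Y : (Fin (2 * d₂ + 2) → Fin n) → F) :
    relrk n (d₁ + d₂ + 1) a c (midApp α b β) (tenProd A Y)
      ≤ (n : ℝ)⁻¹ * relrk n d₂ b c β Y := by
  have hnR : (0 : ℝ) < n := by exact_mod_cast hn
  have hrank : (flat (ptI (d₁ + d₂ + 1) a c (midApp α b β)) (tenProd A Y)).rank
      ≤ n ^ d₁ * (flat (ptI d₂ b c β) Y).rank := by
    rw [flat_tenProd a b c α β A Y]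
    refine le_trans (rank_sep_le _ _ _ _ _ _) ?_
    exact Nat.mul_le_mul_right _ (rank_flat_ptI_le hn hab α A)
  have h1 : ((flat (ptI (d₁ + d₂ + 1) a c (midApp α b β)) (tenProd A Y)).rank : ℝ)
      ≤ (n : ℝ) ^ d₁ * ((flat (ptI d₂ b c β) Y).rank : ℝ) := by exact_mod_cast hrank
  rw [relrk, relrk, div_le_iff₀ (by positivity)]
  calc ((flat (ptI (d₁ + d₂ + 1) a c (midApp α b β)) (tenProd A Y)).rank : ℝ)
      ≤ (n : ℝ) ^ d₁ * ((flat (ptI d₂ b c β) Y).rank : ℝ) := h1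
    _ = (n : ℝ)⁻¹ * (((flat (ptI d₂ b c β) Y).rank : ℝ) / (n : ℝ) ^ (d₂ + 1)) *
          (n : ℝ) ^ (d₁ + d₂ + 1 + 1) := by
        field_simp
        ring

/-! ### Sums concentrated on an embedded index set -/

lemma sum_emb {M I J : Type*} [AddCommMonoid M] [Fintype I] [Fintype J] [DecidableEq J]
    (emb : I → J) (hinj : Function.Injective emb) (G : J → M)
    (h0 : ∀ γ, (∀ i, γ ≠ emb i) → G γ = 0) :
    ∑ γ, G γ = ∑ i, G (emb i) := by
  classical
  have h1 : ∑ i, G (emb i) = ∑ γ ∈ Finset.univ.image emb, G γ :=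
    (Finset.sum_image (fun a _ b _ h => hinj h)).symm
  rw [h1]
  refine (Finset.sum_subset (Finset.subset_univ _) ?_).symm
  intro γ _ hγ
  refine h0 γ fun i hi => hγ ?_
  exact Finset.mem_image.mpr ⟨i, Finset.mem_univ _, hi.symm⟩

/-! ### The decomposition sets defining `rho` -/

def decSet (F : Type*) [Field F] (n e : ℕ) (a b : Bool)
    (A : (Fin (2 * e + 2) → Fin n) → F) : Set ℝ :=
  { r : ℝ | ∃ X : (Fin e → Bool) → ((Fin (2 * e + 2) → Fin n) → F),
      (∑ α, X α) = A ∧ r = ∑ α, relrk n e a b α (X α) }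

lemma rho_def {n e : ℕ} (A : (Fin (2 * e + 2) → Fin n) → F) :
    rho n e A = ⨆ a : Bool, ⨆ b : Bool, sInf (decSet F n e a b A) := rfl

lemma decSet_nonempty {n e : ℕ} (a b : Bool) (A : (Fin (2 * e + 2) → Fin n) → F) :
    (decSet F n e a b A).Nonempty := by
  classical
  refine ⟨_, fun α => if α = (fun _ => false) then A else 0, ?_, rfl⟩
  simp

lemma decSet_bddBelow {n e : ℕ} (a b : Bool) (A : (Fin (2 * e + 2) → Fin n) → F) :
    BddBelow (decSet F n e a b A) := by
  refine ⟨0, ?_⟩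
  rintro r ⟨X, -, rfl⟩
  exact Finset.sum_nonneg fun α _ => relrk_nonneg a b α (X α)

lemma sInf_decSet_le_rho {n e : ℕ} (a b : Bool) (A : (Fin (2 * e + 2) → Fin n) → F) :
    sInf (decSet F n e a b A) ≤ rho n e A := by
  rw [rho_def]
  refine le_trans (le_ciSup (f := fun b' => sInf (decSet F n e a b' A))
    (Set.Finite.bddAbove (Set.finite_range _)) b) ?_
  exact le_ciSup (f := fun a' => ⨆ b' : Bool, sInf (decSet F n e a' b' A))
    (Set.Finite.bddAbove (Set.finite_range _)) a

/-! ### The two core estimates -/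

lemma core_left {n d₁ d₂ : ℕ} (hn : 0 < n) (a c : Bool)
    (A : (Fin (2 * d₁ + 2) → Fin n) → F) (B : (Fin (2 * d₂ + 2) → Fin n) → F) :
    sInf (decSet F n (d₁ + d₂ + 1) a c (tenProd A B))
      ≤ (n : ℝ)⁻¹ * sInf (decSet F n d₁ a (!c) A) := by
  classical
  have hnR : (0 : ℝ) < n := by exact_mod_cast hn
  rw [inv_mul_eq_div, le_div_iff₀ hnR]
  refine le_csInf (decSet_nonempty _ _ _) ?_
  rintro r ⟨X, hsum, rfl⟩
  set b := !c with hb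
  have hbc : b ≠ c := by cases c <;> simp [hb]
  let β₀ : Fin d₂ → Bool := fun _ => false
  let emb : (Fin d₁ → Bool) → (Fin (d₁ + d₂ + 1) → Bool) := fun α => midApp α b β₀
  let hd : (Fin (d₁ + d₂ + 1) → Bool) → (Fin d₁ → Bool) := fun γ k => γ ⟨(k : ℕ), by omega⟩
  have hhd : ∀ α, hd (emb α) = α := by
    intro α
    funext k
    exact (midApp_lt α b β₀ _ k.isLt).trans (congrArg α (Fin.ext rfl))
  have hinj : Function.Injective emb := fun α α' h => by
    rw [← hhd α, ← hhd α', h]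
  let X' : (Fin (d₁ + d₂ + 1) → Bool) → ((Fin (2 * (d₁ + d₂ + 1) + 2) → Fin n) → F) :=
    fun γ => if γ = emb (hd γ) then tenProd (X (hd γ)) B else 0
  have hX'emb : ∀ α, X' (emb α) = tenProd (X α) B := by
    intro α
    simp only [X', hhd α]
    exact if_pos trivial
  have hX'0 : ∀ γ, (∀ α, γ ≠ emb α) → X' γ = 0 := fun γ h => if_neg (h _)
  have hsum' : (∑ γ, X' γ) = tenProd A B := by
    rw [sum_emb emb hinj X' hX'0, Finset.sum_congr rfl (fun α _ => hX'emb α)]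
    funext z
    rw [Finset.sum_apply]
    simp only [tenProd]
    rw [← Finset.sum_mul]
    congr 1
    rw [← hsum, Finset.sum_apply]
  have hmem : (∑ γ, relrk n (d₁ + d₂ + 1) a c γ (X' γ))
      ∈ decSet F n (d₁ + d₂ + 1) a c (tenProd A B) := ⟨X', hsum', rfl⟩
  have hle := csInf_le (decSet_bddBelow a c (tenProd A B)) hmem
  have hval : (∑ γ, relrk n (d₁ + d₂ + 1) a c γ (X' γ))
      ≤ (n : ℝ)⁻¹ * ∑ α, relrk n d₁ a b α (X α) := by
    rw [sum_emb emb hinj _ (fun γ h => by rw [hX'0 γ h, relrk_zero]), Finset.mul_sum]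
    refine Finset.sum_le_sum fun α _ => ?_
    rw [hX'emb α]
    exact relrk_tenProd_left hn hbc a α β₀ (X α) B
  calc sInf (decSet F n (d₁ + d₂ + 1) a c (tenProd A B)) * n
      ≤ ((n : ℝ)⁻¹ * ∑ α, relrk n d₁ a b α (X α)) * n :=
        mul_le_mul_of_nonneg_right (hle.trans hval) hnR.le
    _ = ∑ α, relrk n d₁ a b α (X α) := by field_simp

lemma core_right {n d₁ d₂ : ℕ} (hn : 0 < n) (a c : Bool)
    (A : (Fin (2 * d₁ + 2) → Fin n) → F) (B : (Fin (2 * d₂ + 2) → Fin n) → F) :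
    sInf (decSet F n (d₁ + d₂ + 1) a c (tenProd A B))
      ≤ (n : ℝ)⁻¹ * sInf (decSet F n d₂ (!a) c B) := by
  classical
  have hnR : (0 : ℝ) < n := by exact_mod_cast hn
  rw [inv_mul_eq_div, le_div_iff₀ hnR]
  refine le_csInf (decSet_nonempty _ _ _) ?_
  rintro r ⟨Y, hsum, rfl⟩
  set b := !a with hb
  have hab : a ≠ b := by cases a <;> simp [hb]
  let α₀ : Fin d₁ → Bool := fun _ => false
  let emb : (Fin d₂ → Bool) → (Fin (d₁ + d₂ + 1) → Bool) := fun β => midApp α₀ b β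
  let tl : (Fin (d₁ + d₂ + 1) → Bool) → (Fin d₂ → Bool) :=
    fun γ k => γ ⟨d₁ + 1 + (k : ℕ), by omega⟩
  have htl : ∀ β, tl (emb β) = β := by
    intro β
    funext k
    refine (midApp_gt α₀ b β _ (by show d₁ < d₁ + 1 + (k : ℕ); omega)).trans
      (congrArg β (Fin.ext ?_))
    show d₁ + 1 + (k : ℕ) - d₁ - 1 = (k : ℕ)
    omega
  have hinj : Function.Injective emb := fun β β' h => by
    rw [← htl β, ← htl β', h]
  let X' : (Fin (d₁ + d₂ + 1) → Bool) → ((Fin (2 * (d₁ + d₂ + 1) + 2) → Fin n) → F) :=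
    fun γ => if γ = emb (tl γ) then tenProd A (Y (tl γ)) else 0
  have hX'emb : ∀ β, X' (emb β) = tenProd A (Y β) := by
    intro β
    simp only [X', htl β]
    exact if_pos trivial
  have hX'0 : ∀ γ, (∀ β, γ ≠ emb β) → X' γ = 0 := fun γ h => if_neg (h _)
  have hsum' : (∑ γ, X' γ) = tenProd A B := by
    rw [sum_emb emb hinj X' hX'0, Finset.sum_congr rfl (fun β _ => hX'emb β)]
    funext z
    rw [Finset.sum_apply]
    simp only [tenProd]
    rw [← Finset.mul_sum]
    congr 1
    rw [← hsum, Finset.sum_apply]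
  have hmem : (∑ γ, relrk n (d₁ + d₂ + 1) a c γ (X' γ))
      ∈ decSet F n (d₁ + d₂ + 1) a c (tenProd A B) := ⟨X', hsum', rfl⟩
  have hle := csInf_le (decSet_bddBelow a c (tenProd A B)) hmem
  have hval : (∑ γ, relrk n (d₁ + d₂ + 1) a c γ (X' γ))
      ≤ (n : ℝ)⁻¹ * ∑ β, relrk n d₂ b c β (Y β) := by
    rw [sum_emb emb hinj _ (fun γ h => by rw [hX'0 γ h, relrk_zero]), Finset.mul_sum]
    refine Finset.sum_le_sum fun β _ => ?_
    rw [hX'emb β]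
    exact relrk_tenProd_right hn hab c α₀ β A (Y β)
  calc sInf (decSet F n (d₁ + d₂ + 1) a c (tenProd A B)) * n
      ≤ ((n : ℝ)⁻¹ * ∑ β, relrk n d₂ b c β (Y β)) * n :=
        mul_le_mul_of_nonneg_right (hle.trans hval) hnR.le
    _ = ∑ β, relrk n d₂ b c β (Y β) := by field_simp

end Aux
/-- For tensors `A` of order `2(d₁+1)` and `B` of order `2(d₂+1)`,
`ρ(A ⊗ B) ≤ n⁻¹ · min{ρ(A), ρ(B)}`. -/
theorem stmt14 {F : Type*} [Field F] {n d₁ d₂ : ℕ} (hn : 0 < n)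
    (A : (Fin (2 * d₁ + 2) → Fin n) → F) (B : (Fin (2 * d₂ + 2) → Fin n) → F) :
    rho n (d₁ + d₂ + 1) (tenProd A B) ≤ (n : ℝ)⁻¹ * min (rho n d₁ A) (rho n d₂ B) := by
  have hnR : (0 : ℝ) < n := by exact_mod_cast hn
  rw [rho_def]
  refine ciSup_le fun a => ciSup_le fun c => ?_
  rw [mul_min_of_nonneg _ _ (by positivity : (0:ℝ) ≤ (n : ℝ)⁻¹)]
  refine le_min ?_ ?_
  · exact le_trans (core_left hn a c A B)
      (mul_le_mul_of_nonneg_left (sInf_decSet_le_rho a (!c) A) (by positivity))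
  · exact le_trans (core_right hn a c A B)
      (mul_le_mul_of_nonneg_left (sInf_decSet_le_rho (!a) c B) (by positivity))
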